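/- Let R → S be a finite ring homomorphism such that Hom_R(S, R) is isomorphic to S as an S-module, and let M be a finitely generated S-module. Then the natural map Hom_S(M, S) × Hom_R(S, R) → Hom_R(M, R) given by composition (φ, α) ↦ α ∘ φ is surjective. -/

import Mathlib

/-- If `R → S` is a finite ring map with `Hom_R(S, R) ≅ S` as `S`-modules
(witnessed by a generator `α` such that `s ↦ α(s·‑)` is bijective), then every
`R`-linear map `M → R` from a finite `S`-module `M` factors as an `S`-linear map
`M → S` followed by an `R`-linear map `S → R`. -/
theorem stmt0 (R S : Type*) [CommRing R] [CommRing S] [Algebra R S]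
    [Module.Finite R S]
    (M : Type*) [AddCommGroup M] [Module S M] [Module R M] [IsScalarTower R S M]
    [Module.Finite S M]
    (α : S →ₗ[R] R)
    (hα : Function.Bijective fun s : S => α ∘ₗ LinearMap.mul R S s) :
    ∀ f : M →ₗ[R] R, ∃ (g : M →ₗ[S] S) (β : S →ₗ[R] R),
      f = β ∘ₗ (g.restrictScalars R) := by
  intro f
  -- For each m, the map s ↦ f (s • m) is R-linear
  let φ : M → (S →ₗ[R] R) := fun m =>
    f ∘ₗ ((LinearMap.toSpanSingleton S M m).restrictScalars R)
  have hφ : ∀ m (s : S), φ m s = f (s • m) := fun m s => rfl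
  -- pick preimages
  choose g₀ hg₀ using fun m => hα.2 (φ m)
  have key : ∀ m (s : S), α (g₀ m * s) = f (s • m) := by
    intro m s
    have := congrArg (fun (h : S →ₗ[R] R) => h s) (hg₀ m)
    simpa [hφ] using this
  have hadd : ∀ m m', g₀ (m + m') = g₀ m + g₀ m' := by
    intro m m'
    apply hα.1
    ext s
    simp only [LinearMap.coe_comp, Function.comp_apply, LinearMap.mul_apply_apply]
    rw [show (g₀ m + g₀ m') * s = g₀ m * s + g₀ m' * s by ring, map_add,
      key, key, key, smul_add, map_add]
  have hsmul : ∀ (t : S) m, g₀ (t • m) = t * g₀ m := by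
    intro t m
    apply hα.1
    ext s
    simp only [LinearMap.coe_comp, Function.comp_apply, LinearMap.mul_apply_apply]
    rw [key, show t * g₀ m * s = g₀ m * (s * t) by ring, key,
      mul_smul, smul_comm]
  refine ⟨{ toFun := g₀, map_add' := hadd, map_smul' := hsmul }, α, ?_⟩
  ext m
  simp only [LinearMap.coe_comp, Function.comp_apply, LinearMap.coe_restrictScalars,
    LinearMap.coe_mk, AddHom.coe_mk]
  rw [show α (g₀ m) = α (g₀ m * 1) by rw [mul_one], key, one_smul]
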